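/- Let K be a field, A = K[x_1,…,x_n] with dim_K A_1 = n = 2k for an integer k ≥ 1, and let 𝒮 be a partial spread of k-dimensional subspaces of A_1 (a set of k-subspaces pairwise intersecting in 0). Then: (1) for every H ∈ 𝒮, dim ⟨A_1 H⟩ = k(3k+1)/2; (2) for any two distinct H_1, H_2 ∈ 𝒮, ⟨A_1 H_1⟩ ∩ ⟨A_1 H_2⟩ = ⟨H_1 H_2⟩, which has dimension k²; and (3) for any three distinct H_1, H_2, H_3 ∈ 𝒮, dim(⟨A_1 H_1⟩ ∩ ⟨A_1 H_2⟩ ∩ ⟨A_1 H_3⟩) = binom(k, 2). -/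

import Mathlib

set_option maxHeartbeats 1600000
set_option synthInstance.maxHeartbeats 400000


open MvPolynomial Submodule Set

lemma finsupp_degree_one {τ : Type*} (d : τ →₀ ℕ) (hd : Finsupp.degree d = 1) :
    ∃ i, d = Finsupp.single i 1 := by
  classical
  have h0 : d ≠ 0 := by rintro rfl; simp [map_zero] at hd
  obtain ⟨i, hi⟩ := Finsupp.ne_iff.mp h0
  simp only [Finsupp.coe_zero, Pi.zero_apply] at hi
  have hmem : i ∈ d.support := Finsupp.mem_support_iff.mpr hi
  refine ⟨i, ?_⟩
  ext x
  by_cases hx : x = i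
  · subst hx
    have h1 : d x ≤ 1 := hd ▸ Finset.single_le_sum (fun _ _ => Nat.zero_le _) hmem
    simp only [Finsupp.single_eq_same]
    omega
  · simp only [Finsupp.single_eq_of_ne' (Ne.symm hx)]
    by_contra hne
    have hxm : x ∈ d.support := Finsupp.mem_support_iff.mpr (fun h => hne h)
    have : d i + d x ≤ Finsupp.degree d := by
      rw [Finsupp.degree]
      have hsub : ({i, x} : Finset τ) ⊆ d.support := by
        intro y hy; simp at hy; rcases hy with rfl|rfl <;> assumption
      calc d i + d x = ∑ y ∈ ({i, x} : Finset τ), d y := by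
            rw [Finset.sum_pair (Ne.symm hx)]
        _ ≤ _ := Finset.sum_le_sum_of_subset hsub
    omega

lemma span_X_eq {K τ : Type*} [Field K] :
    homogeneousSubmodule τ K 1 = span K (Set.range (X : τ → MvPolynomial τ K)) := by
  apply le_antisymm
  · intro p hp
    rw [mem_homogeneousSubmodule] at hp
    rw [p.as_sum]
    apply Submodule.sum_mem
    intro d hdsup
    have hc : coeff d p ≠ 0 := MvPolynomial.mem_support_iff.mp hdsup
    have hdeg : Finsupp.degree d = 1 := by
      have := hp hc
      rw [Finsupp.degree_eq_weight_one]; exact this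
    obtain ⟨i, rfl⟩ := finsupp_degree_one d hdeg
    have : monomial (Finsupp.single i 1) (coeff (Finsupp.single i 1) p)
        = (coeff (Finsupp.single i 1) p) • X i := by
      rw [X, smul_monomial, smul_eq_mul, mul_one]
    rw [this]
    exact Submodule.smul_mem _ _ (subset_span ⟨i, rfl⟩)
  · rw [span_le]
    rintro _ ⟨i, rfl⟩
    exact isHomogeneous_X K i

lemma finrank_A1 {K : Type*} [Field K] {τ : Type*} [Fintype τ] :
    Module.finrank K (homogeneousSubmodule τ K 1) = Fintype.card τ := by
  rw [span_X_eq, finrank_span_eq_card (MvPolynomial.linearIndependent_X τ K)]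

lemma exists_fam {K M : Type*} [Field K] [AddCommGroup M] [Module K M]
    (H : Submodule K M) [FiniteDimensional K H] {k : ℕ}
    (hd : Module.finrank K H = k) :
    ∃ u : Fin k → M, LinearIndependent K u ∧ span K (Set.range u) = H := by
  let B := (Module.finBasis K H).reindex (finCongr hd)
  refine ⟨fun i => (B i : M), ?_, ?_⟩
  · exact B.linearIndependent.map' H.subtype (Submodule.ker_subtype H)
  · have : Set.range (fun i => (B i : M)) = H.subtype '' Set.range B := by
      rw [← Set.range_comp]; rfl
    rw [this, ← Submodule.map_span, B.span_eq, Submodule.map_top, Submodule.range_subtype]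

lemma span_fam_mul {K A : Type*} [Field K] [CommRing A] [Algebra K A]
    {α β γ : Type*} (a : α → A) (b : β → A) (F : γ → A)
    (h1 : ∀ g, ∃ x y, F g = a x * b y ∨ F g = b y * a x)
    (h2 : ∀ x y, ∃ g, F g = a x * b y ∨ F g = b y * a x) :
    span K (Set.range F) = span K (Set.range a) * span K (Set.range b) := by
  rw [Submodule.span_mul_span]
  apply le_antisymm
  · rw [Submodule.span_le]
    rintro _ ⟨g, rfl⟩
    obtain ⟨x, y, h | h⟩ := h1 g
    · rw [h]; exact subset_span (Set.mul_mem_mul ⟨x, rfl⟩ ⟨y, rfl⟩)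
    · rw [h, mul_comm]; exact subset_span (Set.mul_mem_mul ⟨x, rfl⟩ ⟨y, rfl⟩)
  · rw [Submodule.span_le]
    rintro _ ⟨_, ⟨x, rfl⟩, _, ⟨y, rfl⟩, rfl⟩
    obtain ⟨g, h | h⟩ := h2 x y
    · show a x * b y ∈ span K (Set.range F)
      rw [← h]; exact subset_span ⟨g, rfl⟩
    · show a x * b y ∈ span K (Set.range F)
      rw [mul_comm, ← h]; exact subset_span ⟨g, rfl⟩

lemma pair_single_inj {τ : Type*} {x y x' y' : τ}
    (h : Finsupp.single x 1 + Finsupp.single y 1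
       = Finsupp.single x' 1 + Finsupp.single y' 1) :
    (x = x' ∧ y = y') ∨ (x = y' ∧ y = x') := by
  classical
  by_cases hxx : x = x'
  · subst hxx
    left
    refine ⟨rfl, ?_⟩
    have := add_left_cancel h
    exact (Finsupp.single_left_inj (one_ne_zero)).mp this
  · right
    have hx := DFunLike.congr_fun h x
    have hx' := DFunLike.congr_fun h x'
    simp only [Finsupp.add_apply, Finsupp.single_apply, if_pos rfl] at hx hx'
    rw [if_neg (fun hh : x' = x => hxx hh.symm), if_pos trivial] at hx
    rw [if_neg hxx, if_pos trivial] at hx'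
    constructor
    · by_cases hyx : y' = x
      · exact hyx.symm
      · rw [if_neg hyx] at hx; by_cases hyx2 : y = x <;> simp [hyx2] at hx
    · by_cases hyx : y = x'
      · exact hyx
      · rw [if_neg hyx] at hx'; by_cases h2 : y' = x' <;> simp [h2] at hx'

lemma prodLI {K τ : Type*} [Field K] {ι : Type*} [Fintype ι] [LinearOrder ι]
    (v : ι → MvPolynomial τ K) (e : ι → τ) (he : Function.Injective e)
    (hmem : ∀ i, v i ∈ homogeneousSubmodule τ K 1)
    (hvi : LinearIndependent K v)
    (hspan : span K (Set.range v) = homogeneousSubmodule τ K 1) :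
    LinearIndependent K
      (fun q : {q : ι × ι // q.1 ≤ q.2} => v q.1.1 * v q.1.2) := by
  classical
  set A1 := homogeneousSubmodule τ K 1 with hA1
  set v' : ι → A1 := fun i => ⟨v i, hmem i⟩ with hv'
  have hv'i : LinearIndependent K v' := by
    apply LinearIndependent.of_comp (A1.subtype)
    exact hvi
  have hv'span : ⊤ = span K (Set.range v') := by
    apply Submodule.map_injective_of_injective A1.injective_subtype
    rw [Submodule.map_span, Submodule.map_top, Submodule.range_subtype, ← Set.range_comp]
    exact hspan.symm.trans (by congr)
  let B : Module.Basis ι K A1 := Module.Basis.mk hv'i (le_of_eq hv'span)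
  let L : A1 →ₗ[K] MvPolynomial τ K := B.constr K (fun i => X (e i))
  have hXmem : ∀ j : τ, X j ∈ A1 := fun j => isHomogeneous_X K j
  let c : τ → MvPolynomial τ K := fun j => L ⟨X j, hXmem j⟩
  let g : MvPolynomial τ K →ₐ[K] MvPolynomial τ K := aeval c
  have hXspan : span K (Set.range (fun j : τ => (⟨X j, hXmem j⟩ : A1))) = ⊤ := by
    apply Submodule.map_injective_of_injective A1.injective_subtype
    rw [Submodule.map_span, Submodule.map_top, Submodule.range_subtype, ← Set.range_comp]
    exact (span_X_eq (K := K) (τ := τ)).symm.trans (by congr)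
  have key : ∀ p : A1, g (p : MvPolynomial τ K) = L p := by
    have : (g.toLinearMap.comp A1.subtype) = L := by
      apply LinearMap.ext_on hXspan
      rintro _ ⟨j, rfl⟩
      simp only [LinearMap.comp_apply, Submodule.coe_subtype, AlgHom.toLinearMap_apply]
      show g (X j) = c j
      simp [g, aeval_X]
    intro p
    exact DFunLike.congr_fun this p
  have hgv : ∀ i, g (v i) = X (e i) := by
    intro i
    have hvv : v i = (v' i : MvPolynomial τ K) := rfl
    rw [hvv, key (v' i)]
    have hBB : v' i = B i := (Module.Basis.mk_apply hv'i (le_of_eq hv'span) i).symm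
    rw [hBB]
    exact B.constr_basis K (fun i => X (e i)) i
  have hmono : LinearIndependent K
      (fun q : {q : ι × ι // q.1 ≤ q.2} => X (e q.1.1) * X (e q.1.2)
        : {q : ι × ι // q.1 ≤ q.2} → MvPolynomial τ K) := by
    have heq : (fun q : {q : ι × ι // q.1 ≤ q.2} => X (e q.1.1) * X (e q.1.2)
        : {q : ι × ι // q.1 ≤ q.2} → MvPolynomial τ K)
        = (fun s : τ →₀ ℕ => (monomial s (1 : K))) ∘
          (fun q : {q : ι × ι // q.1 ≤ q.2} =>
            Finsupp.single (e q.1.1) 1 + Finsupp.single (e q.1.2) 1) := by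
      funext q
      simp [X, monomial_mul]
    rw [heq]
    refine LinearIndependent.comp ?_ _ ?_
    · exact (basisMonomials τ K).linearIndependent
    · rintro ⟨⟨a, b⟩, hab⟩ ⟨⟨a', b'⟩, hab'⟩ hq
      simp only at hq
      rcases pair_single_inj hq with ⟨h1, h2⟩ | ⟨h1, h2⟩
      · ext <;> simp [he h1, he h2]
      · have e1 := he h1; have e2 := he h2
        have hba : b ≤ a := by rw [e2, e1]; exact hab'
        have hab2 : a = b := le_antisymm hab hba
        refine Subtype.ext (Prod.ext ?_ ?_)
        · exact hab2.trans e2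
        · exact hab2.symm.trans e1
  apply LinearIndependent.of_comp g.toLinearMap
  have hcomp : (g.toLinearMap ∘ fun q : {q : ι × ι // q.1 ≤ q.2} => v q.1.1 * v q.1.2)
      = fun q : {q : ι × ι // q.1 ≤ q.2} => X (e q.1.1) * X (e q.1.2) := by
    funext q
    simp only [Function.comp_apply, AlgHom.toLinearMap_apply, map_mul, hgv]
  rw [hcomp]
  exact hmono

lemma sup_eq_A1 {K : Type*} [Field K] {k : ℕ}
    (H H' : Submodule K (MvPolynomial (Fin (2*k)) K))
    (h1 : H ≤ homogeneousSubmodule (Fin (2*k)) K 1)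
    (h2 : H' ≤ homogeneousSubmodule (Fin (2*k)) K 1)
    (d1 : Module.finrank K H = k) (d2 : Module.finrank K H' = k)
    (hd : H ⊓ H' = ⊥) :
    H ⊔ H' = homogeneousSubmodule (Fin (2*k)) K 1 := by
  haveI fdA1 : FiniteDimensional K (homogeneousSubmodule (Fin (2*k)) K 1) := by
    rw [span_X_eq]
    exact FiniteDimensional.span_of_finite K (Set.finite_range _)
  haveI fd1 : FiniteDimensional K H := Submodule.finiteDimensional_of_le h1
  haveI fd2 : FiniteDimensional K H' := Submodule.finiteDimensional_of_le h2
  apply Submodule.eq_of_le_of_finrank_eq (sup_le h1 h2)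
  have hh := Submodule.finrank_sup_add_finrank_inf_eq H H'
  rw [hd, finrank_bot, d1, d2] at hh
  rw [finrank_A1, Fintype.card_fin]
  omega

lemma pair_stuff {K : Type*} [Field K] {k : ℕ}
    (H₁ H₂ : Submodule K (MvPolynomial (Fin (2*k)) K))
    (h1 : H₁ ≤ homogeneousSubmodule (Fin (2*k)) K 1)
    (h2 : H₂ ≤ homogeneousSubmodule (Fin (2*k)) K 1)
    (d1 : Module.finrank K H₁ = k) (d2 : Module.finrank K H₂ = k)
    (hd : H₁ ⊓ H₂ = ⊥) :
    Module.finrank K (homogeneousSubmodule (Fin (2*k)) K 1 * H₁ :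
        Submodule K (MvPolynomial (Fin (2*k)) K)) = (k+1).choose 2 + k*k ∧
    (homogeneousSubmodule (Fin (2*k)) K 1 * H₁) ⊓
      (homogeneousSubmodule (Fin (2*k)) K 1 * H₂) = H₁ * H₂ ∧
    Module.finrank K (H₁ * H₂ : Submodule K (MvPolynomial (Fin (2*k)) K)) = k*k ∧
    (homogeneousSubmodule (Fin (2*k)) K 1) * (homogeneousSubmodule (Fin (2*k)) K 1)
      = (H₁*H₁ ⊔ H₁*H₂) ⊔ H₂*H₂ ∧
    Module.finrank K ((homogeneousSubmodule (Fin (2*k)) K 1) *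
        (homogeneousSubmodule (Fin (2*k)) K 1) :
        Submodule K (MvPolynomial (Fin (2*k)) K))
      = ((k+1).choose 2 + k*k) + (k+1).choose 2 := by
  classical
  set A1 := homogeneousSubmodule (Fin (2*k)) K 1 with hA1def
  haveI fdA1 : FiniteDimensional K A1 := by
    rw [hA1def, span_X_eq]
    exact FiniteDimensional.span_of_finite K (Set.finite_range _)
  haveI fd1 : FiniteDimensional K H₁ := Submodule.finiteDimensional_of_le h1
  haveI fd2 : FiniteDimensional K H₂ := Submodule.finiteDimensional_of_le h2
  have hfA1 : Module.finrank K A1 = 2*k := by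
    rw [hA1def, finrank_A1, Fintype.card_fin]
  have hsup : H₁ ⊔ H₂ = A1 := by
    apply Submodule.eq_of_le_of_finrank_eq (sup_le h1 h2)
    have hh := Submodule.finrank_sup_add_finrank_inf_eq H₁ H₂
    rw [hd, finrank_bot, d1, d2] at hh
    rw [hfA1]; omega
  obtain ⟨u, hu, hus⟩ := exists_fam H₁ d1
  obtain ⟨w, hw, hws⟩ := exists_fam H₂ d2
  have hdisj : Disjoint (span K (Set.range u)) (span K (Set.range w)) := by
    rw [hus, hws, disjoint_iff, hd]
  set v : Fin (k+k) → MvPolynomial (Fin (2*k)) K :=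
    (Sum.elim u w) ∘ finSumFinEquiv.symm with hvdef
  have hvli : LinearIndependent K v :=
    (hu.sum_type hw hdisj).comp _ finSumFinEquiv.symm.injective
  have hvspan : span K (Set.range v) = A1 := by
    rw [hvdef, finSumFinEquiv.symm.surjective.range_comp, Sum.elim_range,
      Submodule.span_union, hus, hws, hsup]
  have humem : ∀ a, u a ∈ H₁ := fun a => hus ▸ subset_span (mem_range_self a)
  have hwmem : ∀ a, w a ∈ H₂ := fun a => hws ▸ subset_span (mem_range_self a)
  have hvmem : ∀ i, v i ∈ A1 := by
    intro i
    have hvi : v i = Sum.elim u w (finSumFinEquiv.symm i) := rfl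
    rw [hvi]
    rcases h : finSumFinEquiv.symm i with a | a
    · exact h1 (humem a)
    · exact h2 (hwmem a)
  have hnk : k + k = 2 * k := by omega
  set Mfam : {q : Fin (k+k) × Fin (k+k) // q.1 ≤ q.2} → MvPolynomial (Fin (2*k)) K :=
    fun q => v q.1.1 * v q.1.2 with hMdef
  have hM : LinearIndependent K Mfam :=
    prodLI v (Fin.cast hnk) (Fin.cast_injective hnk) hvmem hvli hvspan
  -- the three index embeddings
  set j1 : {p : Fin k × Fin k // p.1 ≤ p.2} → {q : Fin (k+k) × Fin (k+k) // q.1 ≤ q.2} :=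
    fun p => ⟨(Fin.castAdd k p.1.1, Fin.castAdd k p.1.2), by
      rw [Fin.le_def]; exact p.2⟩ with hj1def
  set j2 : Fin k × Fin k → {q : Fin (k+k) × Fin (k+k) // q.1 ≤ q.2} :=
    fun x => ⟨(Fin.castAdd k x.1, Fin.natAdd k x.2), by
      rw [Fin.le_def]
      exact le_trans (le_of_lt x.1.isLt) (Nat.le_add_right k _)⟩ with hj2def
  set j3 : {p : Fin k × Fin k // p.1 ≤ p.2} → {q : Fin (k+k) × Fin (k+k) // q.1 ≤ q.2} :=
    fun p => ⟨(Fin.natAdd k p.1.1, Fin.natAdd k p.1.2), by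
      rw [Fin.le_def]; exact Nat.add_le_add_left p.2 k⟩ with hj3def
  have hci : Function.Injective (Fin.castAdd k : Fin k → Fin (k+k)) :=
    Fin.castAdd_injective k k
  have hni : Function.Injective (Fin.natAdd k : Fin k → Fin (k+k)) := by
    intro x y h
    have hval : (k + (x:ℕ)) = (k + (y:ℕ)) := congrArg Fin.val h
    exact Fin.ext (by omega)
  have hj1inj : Function.Injective j1 := by
    intro p p' hpq
    rw [hj1def] at hpq
    simp only [Subtype.mk.injEq, Prod.mk.injEq] at hpq
    exact Subtype.ext (Prod.ext (hci hpq.1) (hci hpq.2))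
  have hj2inj : Function.Injective j2 := by
    intro p p' hpq
    rw [hj2def] at hpq
    simp only [Subtype.mk.injEq, Prod.mk.injEq] at hpq
    exact Prod.ext (hci hpq.1) (hni hpq.2)
  have hj3inj : Function.Injective j3 := by
    intro p p' hpq
    rw [hj3def] at hpq
    simp only [Subtype.mk.injEq, Prod.mk.injEq] at hpq
    exact Subtype.ext (Prod.ext (hni hpq.1) (hni hpq.2))
  -- evaluation of Mfam on the embeddings
  have hvL : ∀ a : Fin k, v (Fin.castAdd k a) = u a := by
    intro a
    rw [hvdef]
    simp only [Function.comp_apply, finSumFinEquiv_symm_apply_castAdd, Sum.elim_inl]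
  have hvR : ∀ a : Fin k, v (Fin.natAdd k a) = w a := by
    intro a
    rw [hvdef]
    simp only [Function.comp_apply, finSumFinEquiv_symm_apply_natAdd, Sum.elim_inr]
  have hMj1 : ∀ p, (Mfam ∘ j1) p = u p.1.1 * u p.1.2 := by
    intro p; simp only [Function.comp_apply, hMdef, hj1def, hvL]
  have hMj2 : ∀ p, (Mfam ∘ j2) p = u p.1 * w p.2 := by
    intro p; simp only [Function.comp_apply, hMdef, hj2def, hvL, hvR]
  have hMj3 : ∀ p, (Mfam ∘ j3) p = w p.1.1 * w p.1.2 := by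
    intro p; simp only [Function.comp_apply, hMdef, hj3def, hvR]
  -- span identifications
  have hs1 : span K (Set.range (Mfam ∘ j1)) = H₁ * H₁ := by
    rw [span_fam_mul u u (Mfam ∘ j1)
      (fun g => ⟨g.1.1, g.1.2, Or.inl (hMj1 g)⟩)
      (fun x y => by
        rcases le_total x y with h | h
        · exact ⟨⟨(x, y), h⟩, Or.inl (hMj1 _)⟩
        · exact ⟨⟨(y, x), h⟩, Or.inr (hMj1 _)⟩), hus]
  have hs2 : span K (Set.range (Mfam ∘ j2)) = H₁ * H₂ := by
    rw [span_fam_mul u w (Mfam ∘ j2)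
      (fun g => ⟨g.1, g.2, Or.inl (hMj2 g)⟩)
      (fun x y => ⟨(x, y), Or.inl (hMj2 _)⟩), hus, hws]
  have hs3 : span K (Set.range (Mfam ∘ j3)) = H₂ * H₂ := by
    rw [span_fam_mul w w (Mfam ∘ j3)
      (fun g => ⟨g.1.1, g.1.2, Or.inl (hMj3 g)⟩)
      (fun x y => by
        rcases le_total x y with h | h
        · exact ⟨⟨(x, y), h⟩, Or.inl (hMj3 _)⟩
        · exact ⟨⟨(y, x), h⟩, Or.inr (hMj3 _)⟩), hws]
  -- dimensions of the three products
  have cardTk : Fintype.card {p : Fin k × Fin k // p.1 ≤ p.2} = (k+1).choose 2 := by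
    rw [← Fintype.card_congr (Sym2.sortEquiv (α := Fin k)), Sym2.card, Fintype.card_fin]
  have hf1 : Module.finrank K (H₁ * H₁ : Submodule K (MvPolynomial (Fin (2*k)) K))
      = (k+1).choose 2 := by
    rw [← hs1, finrank_span_eq_card (hM.comp j1 hj1inj), cardTk]
  have hf2 : Module.finrank K (H₁ * H₂ : Submodule K (MvPolynomial (Fin (2*k)) K))
      = k * k := by
    rw [← hs2, finrank_span_eq_card (hM.comp j2 hj2inj), Fintype.card_prod, Fintype.card_fin]
  have hf3 : Module.finrank K (H₂ * H₂ : Submodule K (MvPolynomial (Fin (2*k)) K))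
      = (k+1).choose 2 := by
    rw [← hs3, finrank_span_eq_card (hM.comp j3 hj3inj), cardTk]
  -- finite dimensionality of products
  haveI fdP1 : FiniteDimensional K
      (H₁ * H₁ : Submodule K (MvPolynomial (Fin (2*k)) K)) := by
    rw [← hs1]; exact FiniteDimensional.span_of_finite K (Set.finite_range _)
  haveI fdP2 : FiniteDimensional K
      (H₁ * H₂ : Submodule K (MvPolynomial (Fin (2*k)) K)) := by
    rw [← hs2]; exact FiniteDimensional.span_of_finite K (Set.finite_range _)
  haveI fdP3 : FiniteDimensional K
      (H₂ * H₂ : Submodule K (MvPolynomial (Fin (2*k)) K)) := by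
    rw [← hs3]; exact FiniteDimensional.span_of_finite K (Set.finite_range _)
  -- disjointness of ranges of the embeddings
  have hmem1 : ∀ q ∈ Set.range j1, ((q : (Fin (k+k)) × (Fin (k+k))).2 : ℕ) < k := by
    rintro _ ⟨p, rfl⟩; rw [hj1def]; exact p.1.2.isLt
  have hmem2a : ∀ q ∈ Set.range j2, ((q : (Fin (k+k)) × (Fin (k+k))).1 : ℕ) < k := by
    rintro _ ⟨p, rfl⟩; rw [hj2def]; exact p.1.isLt
  have hmem2b : ∀ q ∈ Set.range j2, k ≤ ((q : (Fin (k+k)) × (Fin (k+k))).2 : ℕ) := by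
    rintro _ ⟨p, rfl⟩; rw [hj2def]; exact Nat.le_add_right k _
  have hmem3 : ∀ q ∈ Set.range j3, k ≤ ((q : (Fin (k+k)) × (Fin (k+k))).1 : ℕ) := by
    rintro _ ⟨p, rfl⟩; rw [hj3def]; exact Nat.le_add_right k _
  have hr12 : Disjoint (Set.range j1) (Set.range j2) := by
    rw [Set.disjoint_left]
    intro q hq1 hq2
    have := hmem1 q hq1
    have := hmem2b q hq2
    omega
  have hr13 : Disjoint (Set.range j1) (Set.range j3) := by
    rw [Set.disjoint_left]
    intro q hq1 hq3
    have h1' := hmem1 q hq1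
    have h3' := hmem3 q hq3
    have hle : ((q : (Fin (k+k)) × (Fin (k+k))).1 : ℕ) ≤ ((q : (Fin (k+k)) × (Fin (k+k))).2 : ℕ) := q.2
    omega
  have hr23 : Disjoint (Set.range j2) (Set.range j3) := by
    rw [Set.disjoint_left]
    intro q hq2 hq3
    have := hmem2a q hq2
    have := hmem3 q hq3
    omega
  -- disjointness of spans
  have hd12 : (H₁ * H₁) ⊓ (H₁ * H₂) = ⊥ := by
    have hsp := hM.disjoint_span_image (R := K) hr12
    rw [← Set.range_comp, ← Set.range_comp, hs1, hs2] at hsp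
    exact disjoint_iff.mp hsp
  have hd1_23 : (H₁ * H₁) ⊓ ((H₁ * H₂) ⊔ (H₂ * H₂)) = ⊥ := by
    have hsp := hM.disjoint_span_image (R := K)
      (Set.disjoint_union_right.mpr ⟨hr12, hr13⟩)
    rw [Set.image_union, Submodule.span_union, ← Set.range_comp, ← Set.range_comp,
      ← Set.range_comp, hs1, hs2, hs3] at hsp
    exact disjoint_iff.mp hsp
  have hd12_3 : ((H₁ * H₁) ⊔ (H₁ * H₂)) ⊓ (H₂ * H₂) = ⊥ := by
    have hsp := hM.disjoint_span_image (R := K)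
      (Set.disjoint_union_left.mpr ⟨hr13, hr23⟩)
    rw [Set.image_union, Submodule.span_union, ← Set.range_comp, ← Set.range_comp,
      ← Set.range_comp, hs1, hs2, hs3] at hsp
    exact disjoint_iff.mp hsp
  -- decompositions of A1 * H
  have hA1H1 : A1 * H₁ = H₁ * H₁ ⊔ H₁ * H₂ := by
    rw [← hsup, Submodule.sup_mul, Submodule.mul_comm H₂ H₁]
  have hA1H2 : A1 * H₂ = H₁ * H₂ ⊔ H₂ * H₂ := by
    rw [← hsup, Submodule.sup_mul]
  have hE : A1 * A1 = (H₁ * H₁ ⊔ H₁ * H₂) ⊔ H₂ * H₂ := by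
    conv_lhs => rw [← hsup]
    rw [Submodule.sup_mul, Submodule.mul_sup, Submodule.mul_sup,
      Submodule.mul_comm H₂ H₁, sup_assoc,
      ← sup_assoc (H₁ * H₂) (H₁ * H₂) (H₂ * H₂), sup_idem, ← sup_assoc]
  refine ⟨?_, ?_, hf2, hE, ?_⟩
  · rw [hA1H1]
    have h := Submodule.finrank_sup_add_finrank_inf_eq (H₁ * H₁) (H₁ * H₂)
    rw [hd12, finrank_bot, hf1, hf2] at h
    omega
  · rw [hA1H1, hA1H2, sup_comm (H₁ * H₁) (H₁ * H₂),
      sup_inf_assoc_of_le (H₁ * H₁) (le_sup_left :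
        H₁ * H₂ ≤ H₁ * H₂ ⊔ H₂ * H₂), hd1_23, sup_bot_eq]
  · rw [hE]
    have ha := Submodule.finrank_sup_add_finrank_inf_eq (H₁ * H₁ ⊔ H₁ * H₂) (H₂ * H₂)
    rw [hd12_3, finrank_bot, hf3] at ha
    have hb := Submodule.finrank_sup_add_finrank_inf_eq (H₁ * H₁) (H₁ * H₂)
    rw [hd12, finrank_bot, hf1, hf2] at hb
    omega

/-- Let `𝒮` be a partial spread of `k`-subspaces of `A_1`, where
`dim A_1 = 2k`.  Then: (1) `dim ⟨A_1H⟩ = k(3k+1)/2` for `H ∈ 𝒮`;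
(2) `⟨A_1H_1⟩ ∩ ⟨A_1H_2⟩ = ⟨H_1H_2⟩` has dimension `k²` for distinct
`H_1, H_2 ∈ 𝒮`; and (3) the intersection of `⟨A_1H_i⟩` over three distinct
members has dimension `k.choose 2`. -/
theorem partial_spread_intersections (K : Type*) [Field K] (k : ℕ)
    (hk : 1 ≤ k)
    (𝒮 : Set (Submodule K (MvPolynomial (Fin (2 * k)) K)))
    (h𝒮 : ∀ H ∈ 𝒮, H ≤ homogeneousSubmodule (Fin (2 * k)) K 1)
    (hdim : ∀ H ∈ 𝒮, Module.finrank K H = k)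
    (hspread : ∀ H₁ ∈ 𝒮, ∀ H₂ ∈ 𝒮, H₁ ≠ H₂ → H₁ ⊓ H₂ = ⊥) :
    (∀ H ∈ 𝒮,
      Module.finrank K
          (homogeneousSubmodule (Fin (2 * k)) K 1 * H :
            Submodule K (MvPolynomial (Fin (2 * k)) K)) =
        k * (3 * k + 1) / 2) ∧
    (∀ H₁ ∈ 𝒮, ∀ H₂ ∈ 𝒮, H₁ ≠ H₂ →
      (homogeneousSubmodule (Fin (2 * k)) K 1 * H₁) ⊓
          (homogeneousSubmodule (Fin (2 * k)) K 1 * H₂) = H₁ * H₂ ∧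
      Module.finrank K
          (H₁ * H₂ : Submodule K (MvPolynomial (Fin (2 * k)) K)) = k ^ 2) ∧
    (∀ H₁ ∈ 𝒮, ∀ H₂ ∈ 𝒮, ∀ H₃ ∈ 𝒮, H₁ ≠ H₂ → H₁ ≠ H₃ → H₂ ≠ H₃ →
      Module.finrank K
          ((homogeneousSubmodule (Fin (2 * k)) K 1 * H₁) ⊓
            (homogeneousSubmodule (Fin (2 * k)) K 1 * H₂) ⊓
            (homogeneousSubmodule (Fin (2 * k)) K 1 * H₃) :
            Submodule K (MvPolynomial (Fin (2 * k)) K)) =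
        k.choose 2) := by
  classical
  haveI fdA1 : FiniteDimensional K (homogeneousSubmodule (Fin (2*k)) K 1) := by
    rw [span_X_eq]
    exact FiniteDimensional.span_of_finite K (Set.finite_range _)
  have hfA1 : Module.finrank K (homogeneousSubmodule (Fin (2*k)) K 1) = 2*k := by
    rw [finrank_A1, Fintype.card_fin]
  -- arithmetic preliminaries
  obtain ⟨m, hm⟩ := Nat.even_mul_succ_self k
  have hB : k * (k+1) = k*k + k := Nat.mul_succ k k
  have hC : (k+1).choose 2 = m := by
    rw [Nat.choose_two_right, Nat.add_sub_cancel, Nat.mul_comm, hm]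
    omega
  have hD : k.choose 2 = m - k := by
    have h : (k+1).choose 2 = k.choose 1 + k.choose 2 := Nat.choose_succ_succ' k 1
    rw [Nat.choose_one_right] at h
    omega
  have hkk : k ≤ k*k := Nat.le_mul_of_pos_left k (by omega)
  refine ⟨?_, ?_, ?_⟩
  · -- part 1
    intro H hH
    haveI : FiniteDimensional K H := Submodule.finiteDimensional_of_le (h𝒮 H hH)
    set A1 := homogeneousSubmodule (Fin (2*k)) K 1 with hA1def
    obtain ⟨q, hq⟩ := Submodule.exists_isCompl (Submodule.comap A1.subtype H)
    set W := Submodule.map A1.subtype q with hWdef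
    have hmapH : Submodule.map A1.subtype (Submodule.comap A1.subtype H) = H := by
      rw [Submodule.map_comap_subtype, inf_eq_right.mpr (h𝒮 H hH)]
    have hWle : W ≤ A1 := Submodule.map_subtype_le A1 q
    have hinf : H ⊓ W = ⊥ := by
      rw [← hmapH, hWdef, ← Submodule.map_inf _ A1.injective_subtype,
        hq.inf_eq_bot, Submodule.map_bot]
    have hfH' : Module.finrank K (Submodule.comap A1.subtype H) = k := by
      have he : Module.finrank K (Submodule.comap A1.subtype H)
          = Module.finrank K (Submodule.map A1.subtype (Submodule.comap A1.subtype H)) :=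
        (Submodule.equivMapOfInjective A1.subtype A1.injective_subtype
          (Submodule.comap A1.subtype H)).finrank_eq
      rw [hmapH] at he
      exact he.trans (hdim H hH)
    have hfW : Module.finrank K W = k := by
      have h2 := Submodule.finrank_add_eq_of_isCompl hq
      have h3 : Module.finrank K q = Module.finrank K W :=
        (Submodule.equivMapOfInjective A1.subtype A1.injective_subtype q).finrank_eq
      rw [hfA1] at h2
      omega
    obtain ⟨c1, -, -, -, -⟩ :=
      pair_stuff H W (h𝒮 H hH) hWle (hdim H hH) hfW hinf
    rw [hA1def, c1]
    have hE2 : k*(3*k+1) = k*(k+1) + (k*k + k*k) := by ring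
    omega
  · -- part 2
    intro H₁ hH1 H₂ hH2 hne
    obtain ⟨-, c2, c3, -, -⟩ :=
      pair_stuff H₁ H₂ (h𝒮 _ hH1) (h𝒮 _ hH2) (hdim _ hH1) (hdim _ hH2)
        (hspread _ hH1 _ hH2 hne)
    exact ⟨c2, by rw [pow_two]; exact c3⟩
  · -- part 3
    intro H₁ hH1 H₂ hH2 H₃ hH3 h12 h13 h23
    obtain ⟨-, c2, c3, hE, c5⟩ :=
      pair_stuff H₁ H₂ (h𝒮 _ hH1) (h𝒮 _ hH2) (hdim _ hH1) (hdim _ hH2)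
        (hspread _ hH1 _ hH2 h12)
    obtain ⟨c1', -, -, -, -⟩ :=
      pair_stuff H₃ H₁ (h𝒮 _ hH3) (h𝒮 _ hH1) (hdim _ hH3) (hdim _ hH1)
        (hspread _ hH3 _ hH1 (Ne.symm h13).symm.symm)
    have sup32 : H₃ ⊔ H₂ = homogeneousSubmodule (Fin (2*k)) K 1 :=
      sup_eq_A1 H₃ H₂ (h𝒮 _ hH3) (h𝒮 _ hH2) (hdim _ hH3) (hdim _ hH2)
        (hspread _ hH3 _ hH2 (Ne.symm h23))
    have sup31 : H₃ ⊔ H₁ = homogeneousSubmodule (Fin (2*k)) K 1 :=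
      sup_eq_A1 H₃ H₁ (h𝒮 _ hH3) (h𝒮 _ hH1) (hdim _ hH3) (hdim _ hH1)
        (hspread _ hH3 _ hH1 (Ne.symm h13))
    rw [c2]
    haveI fdAA : FiniteDimensional K
        (homogeneousSubmodule (Fin (2*k)) K 1 * homogeneousSubmodule (Fin (2*k)) K 1 :
          Submodule K (MvPolynomial (Fin (2*k)) K)) := by
      rw [span_X_eq, Submodule.span_mul_span]
      exact FiniteDimensional.span_of_finite K
        ((Set.finite_range _).mul (Set.finite_range _))
    have hXle : H₁ * H₂ ≤
        homogeneousSubmodule (Fin (2*k)) K 1 * homogeneousSubmodule (Fin (2*k)) K 1 :=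
      mul_le_mul' (h𝒮 _ hH1) (h𝒮 _ hH2)
    have hYle : homogeneousSubmodule (Fin (2*k)) K 1 * H₃ ≤
        homogeneousSubmodule (Fin (2*k)) K 1 * homogeneousSubmodule (Fin (2*k)) K 1 :=
      mul_le_mul' le_rfl (h𝒮 _ hH3)
    haveI : FiniteDimensional K (H₁ * H₂ :
        Submodule K (MvPolynomial (Fin (2*k)) K)) :=
      Submodule.finiteDimensional_of_le hXle
    haveI : FiniteDimensional K
        (homogeneousSubmodule (Fin (2*k)) K 1 * H₃ :
          Submodule K (MvPolynomial (Fin (2*k)) K)) :=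
      Submodule.finiteDimensional_of_le hYle
    have hXY : H₁ * H₂ ⊔ homogeneousSubmodule (Fin (2*k)) K 1 * H₃ =
        homogeneousSubmodule (Fin (2*k)) K 1 * homogeneousSubmodule (Fin (2*k)) K 1 := by
      apply le_antisymm (sup_le hXle hYle)
      rw [hE]
      have hH3H1 : H₃ * H₁ ≤ homogeneousSubmodule (Fin (2*k)) K 1 * H₃ :=
        le_trans (le_of_eq (Submodule.mul_comm H₃ H₁))
          (mul_le_mul' (h𝒮 _ hH1) le_rfl)
      have hH3H2 : H₃ * H₂ ≤ homogeneousSubmodule (Fin (2*k)) K 1 * H₃ :=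
        le_trans (le_of_eq (Submodule.mul_comm H₃ H₂))
          (mul_le_mul' (h𝒮 _ hH2) le_rfl)
      have hH1H1 : H₁ * H₁ ≤ H₁ * H₂ ⊔ homogeneousSubmodule (Fin (2*k)) K 1 * H₃ := by
        calc H₁ * H₁ ≤ homogeneousSubmodule (Fin (2*k)) K 1 * H₁ :=
              mul_le_mul' (h𝒮 _ hH1) le_rfl
          _ = (H₃ ⊔ H₂) * H₁ := by rw [sup32]
          _ = H₃ * H₁ ⊔ H₂ * H₁ := Submodule.sup_mul _ _ _
          _ ≤ _ := sup_le (hH3H1.trans le_sup_right)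
              ((le_of_eq (Submodule.mul_comm H₂ H₁)).trans le_sup_left)
      have hH2H2 : H₂ * H₂ ≤ H₁ * H₂ ⊔ homogeneousSubmodule (Fin (2*k)) K 1 * H₃ := by
        calc H₂ * H₂ ≤ homogeneousSubmodule (Fin (2*k)) K 1 * H₂ :=
              mul_le_mul' (h𝒮 _ hH2) le_rfl
          _ = (H₃ ⊔ H₁) * H₂ := by rw [sup31]
          _ = H₃ * H₂ ⊔ H₁ * H₂ := Submodule.sup_mul _ _ _
          _ ≤ _ := sup_le (hH3H2.trans le_sup_right) le_sup_left
      exact sup_le (sup_le hH1H1 le_sup_left) hH2H2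
    have h := Submodule.finrank_sup_add_finrank_inf_eq (H₁ * H₂)
      (homogeneousSubmodule (Fin (2*k)) K 1 * H₃)
    rw [hXY, c5, c3, c1'] at h
    omega
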